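/- Let R be a commutative ring and φ : E¹ → E² an R-linear map between R-modules. Then the two-term complex (E•, φ) is equivalent to a two-term complex of the form (0 → F), for some R-module F, if and only if φ admits an R-linear left inverse, i.e. there exists an R-linear map η : E² → E¹ with η ∘ φ = id_{E¹}. -/

import Mathlib

universe u v

/-- The two-term complexes `(E•, φ)` and `(F•, ψ)` of `R`-modules are equivalent in the
2-category of two-term complexes: there are 1-morphisms `f• : (E•, φ) → (F•, ψ)` and
`g• : (F•, ψ) → (E•, φ)` together with 2-morphisms (homotopies) `g• ∘ f• ⇒ id` and
`f• ∘ g• ⇒ id`. -/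
def ComplexEquiv {R : Type*} [CommRing R] {E1 E2 F1 F2 : Type*}
    [AddCommGroup E1] [Module R E1] [AddCommGroup E2] [Module R E2]
    [AddCommGroup F1] [Module R F1] [AddCommGroup F2] [Module R F2]
    (φ : E1 →ₗ[R] E2) (ψ : F1 →ₗ[R] F2) : Prop :=
  ∃ (f1 : E1 →ₗ[R] F1) (f2 : E2 →ₗ[R] F2) (g1 : F1 →ₗ[R] E1) (g2 : F2 →ₗ[R] E2)
    (η : E2 →ₗ[R] E1) (ζ : F2 →ₗ[R] F1),
    ψ ∘ₗ f1 = f2 ∘ₗ φ ∧ φ ∘ₗ g1 = g2 ∘ₗ ψ ∧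
    LinearMap.id = g1 ∘ₗ f1 + η ∘ₗ φ ∧ LinearMap.id = g2 ∘ₗ f2 + φ ∘ₗ η ∧
    LinearMap.id = f1 ∘ₗ g1 + ζ ∘ₗ ψ ∧ LinearMap.id = f2 ∘ₗ g2 + ψ ∘ₗ ζ

/-- A two-term complex `(E•, φ)` of `R`-modules is equivalent to a two-term complex of the form
`(0 → F)` for some `R`-module `F` if and only if `φ` admits an `R`-linear left inverse. -/
theorem complexEquiv_zero_iff_leftInverse {R : Type*} [CommRing R]
    {E1 : Type v} {E2 : Type u}
    [AddCommGroup E1] [Module R E1] [AddCommGroup E2] [Module R E2]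
    (φ : E1 →ₗ[R] E2) :
    (∃ F : ModuleCat.{u} R, ComplexEquiv φ (0 : PUnit.{u + 1} →ₗ[R] F)) ↔
      ∃ η : E2 →ₗ[R] E1, η ∘ₗ φ = LinearMap.id := by
  constructor
  · rintro ⟨F, f1, f2, g1, g2, η, ζ, h1, h2, h3, h4, h5, h6⟩
    refine ⟨η, ?_⟩
    have hg1 : g1 = 0 := Subsingleton.elim _ _
    rw [hg1] at h3
    simpa using h3.symm
  · rintro ⟨η, hη⟩
    have hηφ : ∀ x, η (φ x) = x := fun x => congrFun (congrArg DFunLike.coe hη) x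
    have hker : LinearMap.range φ ≤ LinearMap.ker (LinearMap.id - φ ∘ₗ η) := by
      rintro _ ⟨x, rfl⟩
      simp only [LinearMap.mem_ker, LinearMap.sub_apply, LinearMap.id_apply,
        LinearMap.comp_apply, hηφ, sub_self]
    refine ⟨ModuleCat.of R (E2 ⧸ LinearMap.range φ), 0, (LinearMap.range φ).mkQ, 0,
      Submodule.liftQ _ (LinearMap.id - φ ∘ₗ η) hker, η, 0, ?_, ?_, ?_, ?_, ?_, ?_⟩
    · ext x
      exact ((Submodule.Quotient.mk_eq_zero _).2 (LinearMap.mem_range_self φ x)).symm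
    · ext x
      simp
    · ext x
      simp [hηφ]
    · ext x
      show x = Submodule.liftQ _ (LinearMap.id - φ ∘ₗ η) hker
        (Submodule.Quotient.mk x) + φ (η x)
      rw [Submodule.liftQ_apply]
      simp
    · ext x
    · ext x
      show (Submodule.Quotient.mk x : E2 ⧸ LinearMap.range φ) = (LinearMap.range φ).mkQ
        (Submodule.liftQ _ (LinearMap.id - φ ∘ₗ η) hker (Submodule.Quotient.mk x))
        + (0 : E2 ⧸ LinearMap.range φ)
      rw [Submodule.liftQ_apply, add_zero, Submodule.mkQ_apply, LinearMap.sub_apply,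
        Submodule.Quotient.mk_sub, LinearMap.id_apply, LinearMap.comp_apply,
        (Submodule.Quotient.mk_eq_zero _).2 (LinearMap.mem_range_self φ (η x)), sub_zero]
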